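/- arXiv:1811.02981 — 3 statements merged into one kernel-verified Lean document; each statement's English description precedes it below -/
import Mathlib

section
/- Let m ≥ 1, n > m be integers and g : [0,∞) → [0,∞) non-decreasing, positive on (0,∞), with G(t) = ∫_t^∞ g(ζ)^{-1/m} ζ^{1/m-1} dζ finite for t > 0. If liminf_{t→0⁺} G(t)^{n-m} · t < ∞, then liminf_{t→0⁺} g(t)^{m-n} · t^n < ∞. -/
open Real

lemma key_eq (a s : ℝ) (ha : 0 < a) (hs : 0 < s) (m n : ℕ) (hm : 1 ≤ m) (hmn : m < n) :
    a ^ ((m:ℝ)-(n:ℝ)) * (2*s) ^ (n:ℝ) =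
      ((a ^ (-(1/(m:ℝ))) * (2*s) ^ ((1/(m:ℝ))-1) * s) ^ (n - m) * s) ^ m
        * 2 ^ ((n:ℝ) + ((m:ℝ)-1)*((n:ℝ)-(m:ℝ))) := by
  have hm0 : (m:ℝ) ≠ 0 := by positivity
  have h2s : (0:ℝ) < 2*s := by linarith
  have hk : ((n - m : ℕ):ℝ) = (n:ℝ) - m := by rw [Nat.cast_sub hmn.le]
  have hY : (0:ℝ) < a ^ (-(1/(m:ℝ))) * (2*s) ^ ((1/(m:ℝ))-1) * s := by positivity
  have hX : (0:ℝ) < (a ^ (-(1/(m:ℝ))) * (2*s) ^ ((1/(m:ℝ))-1) * s) ^ (n - m) * s := by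
    positivity
  have hLHS : (0:ℝ) < a ^ ((m:ℝ)-(n:ℝ)) * (2*s) ^ (n:ℝ) := by positivity
  have hRHS : (0:ℝ) < ((a ^ (-(1/(m:ℝ))) * (2*s) ^ ((1/(m:ℝ))-1) * s) ^ (n - m) * s) ^ m
        * 2 ^ ((n:ℝ) + ((m:ℝ)-1)*((n:ℝ)-(m:ℝ))) := by positivity
  have hlog : log (a ^ ((m:ℝ)-(n:ℝ)) * (2*s) ^ (n:ℝ)) =
      log (((a ^ (-(1/(m:ℝ))) * (2*s) ^ ((1/(m:ℝ))-1) * s) ^ (n - m) * s) ^ m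
        * 2 ^ ((n:ℝ) + ((m:ℝ)-1)*((n:ℝ)-(m:ℝ)))) := by
    rw [log_mul (ne_of_gt (by positivity)) (ne_of_gt (by positivity)),
      log_mul (ne_of_gt (by positivity)) (ne_of_gt (by positivity)),
      log_rpow ha, log_rpow h2s, log_rpow (by norm_num : (0:ℝ) < 2),
      log_pow, log_mul (ne_of_gt (pow_pos hY _)) hs.ne', log_pow,
      log_mul (ne_of_gt (by positivity)) hs.ne',
      log_mul (ne_of_gt (mul_pos (rpow_pos_of_pos ha _) (rpow_pos_of_pos h2s _))) hs.ne',
      log_mul (ne_of_gt (rpow_pos_of_pos ha _)) (ne_of_gt (rpow_pos_of_pos h2s _)),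
      log_rpow ha, log_rpow h2s, log_mul (by norm_num : (2:ℝ) ≠ 0) hs.ne', hk]
    field_simp
    ring
  calc a ^ ((m:ℝ)-(n:ℝ)) * (2*s) ^ (n:ℝ) = exp (log (a ^ ((m:ℝ)-(n:ℝ)) * (2*s) ^ (n:ℝ))) :=
        (exp_log hLHS).symm
    _ = _ := by rw [hlog, exp_log hRHS]

open MeasureTheory Set Filter

theorem stmt_4 (m n : ℕ) (hm : 1 ≤ m) (hmn : m < n) (g : ℝ → ℝ)
    (hmono : MonotoneOn g (Set.Ici 0))
    (hnonneg : ∀ ζ ≥ (0:ℝ), 0 ≤ g ζ)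
    (hpos : ∀ ζ > (0:ℝ), 0 < g ζ)
    (hfin : ∀ t > (0:ℝ),
      IntegrableOn (fun ζ : ℝ => g ζ ^ (-(1/(m:ℝ))) * ζ ^ ((1/(m:ℝ)) - 1)) (Set.Ioi t))
    (hliminf : ∃ M : ℝ, ∃ᶠ t in nhdsWithin (0:ℝ) (Set.Ioi 0),
      (∫ ζ in Set.Ioi t, g ζ ^ (-(1/(m:ℝ))) * ζ ^ ((1/(m:ℝ)) - 1)) ^ (n - m) * t ≤ M) :
    ∃ M : ℝ, ∃ᶠ t in nhdsWithin (0:ℝ) (Set.Ioi 0),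
      g t ^ ((m:ℝ) - (n:ℝ)) * t ^ (n:ℝ) ≤ M := by
  obtain ⟨M, hM⟩ := hliminf
  set f : ℝ → ℝ := fun ζ : ℝ => g ζ ^ (-(1/(m:ℝ))) * ζ ^ ((1/(m:ℝ)) - 1) with hf
  set C : ℝ := 2 ^ ((n:ℝ) + ((m:ℝ)-1)*((n:ℝ)-(m:ℝ))) with hC
  refine ⟨(max M 0) ^ m * C, ?_⟩
  -- key pointwise implication
  have key : ∀ t > (0:ℝ), (∫ ζ in Set.Ioi t, f ζ) ^ (n - m) * t ≤ M →
      g (2*t) ^ ((m:ℝ) - (n:ℝ)) * (2*t) ^ (n:ℝ) ≤ (max M 0) ^ m * C := by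
    intro t ht hle
    have h2t : (0:ℝ) < 2*t := by linarith
    have hg2t : 0 < g (2*t) := hpos _ h2t
    set L : ℝ := g (2*t) ^ (-(1/(m:ℝ))) * (2*t) ^ ((1/(m:ℝ))-1) with hL
    have hLpos : 0 < L := by positivity
    -- lower bound on the integral
    have hGI : L * t ≤ ∫ ζ in Set.Ioi t, f ζ := by
      have hsub : Set.Ioc t (2*t) ⊆ Set.Ioi t := Set.Ioc_subset_Ioi_self
      have hint : IntegrableOn f (Set.Ioc t (2*t)) := (hfin t ht).mono_set hsub
      have h1 : L * t ≤ ∫ ζ in Set.Ioc t (2*t), f ζ := by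
        have hvol : (volume (Set.Ioc t (2*t))).toReal = t := by
          rw [Real.volume_Ioc, ENNReal.toReal_ofReal (by linarith)]; ring
        have := setIntegral_ge_of_const_le_real (c := L) measurableSet_Ioc
          (by rw [Real.volume_Ioc]; exact ENNReal.ofReal_ne_top) ?_ hint
        · rw [measureReal_def, hvol] at this; exact this
        · intro ζ hζ
          have hζ0 : 0 < ζ := lt_trans ht hζ.1
          have hgζ : 0 < g ζ := hpos ζ hζ0
          have hgle : g ζ ≤ g (2*t) :=
            hmono (le_of_lt hζ0) (le_of_lt h2t) hζ.2
          have e1 : g (2*t) ^ (-(1/(m:ℝ))) ≤ g ζ ^ (-(1/(m:ℝ))) :=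
            Real.rpow_le_rpow_of_nonpos hgζ hgle (neg_nonpos.mpr (by positivity))
          have e2 : (2*t) ^ ((1/(m:ℝ))-1) ≤ ζ ^ ((1/(m:ℝ))-1) := by
            refine Real.rpow_le_rpow_of_nonpos hζ0 hζ.2 ?_
            have : (1:ℝ) ≤ (m:ℝ) := by exact_mod_cast hm
            have : 1/(m:ℝ) ≤ 1 := by
              rw [div_le_one (by positivity)]; exact this
            linarith
          exact mul_le_mul e1 e2 (Real.rpow_nonneg (le_of_lt h2t) _)
            (Real.rpow_nonneg (le_of_lt hgζ) _)
      have h2 : ∫ ζ in Set.Ioc t (2*t), f ζ ≤ ∫ ζ in Set.Ioi t, f ζ := by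
        refine setIntegral_mono_set (hfin t ht) ?_ (Filter.Eventually.of_forall hsub)
        filter_upwards [ae_restrict_mem measurableSet_Ioi] with ζ hζ
        exact mul_nonneg (Real.rpow_nonneg (hnonneg ζ (le_of_lt (lt_trans ht hζ))) _)
          (Real.rpow_nonneg (le_of_lt (lt_trans ht hζ)) _)
      linarith
    -- raise to powers
    have hLt : 0 ≤ L * t := le_of_lt (mul_pos hLpos ht)
    have hstep : (L * t) ^ (n - m) * t ≤ max M 0 := by
      calc (L * t) ^ (n - m) * t ≤ (∫ ζ in Set.Ioi t, f ζ) ^ (n - m) * t :=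
            mul_le_mul_of_nonneg_right (pow_le_pow_left₀ hLt hGI _) (le_of_lt ht)
        _ ≤ M := hle
        _ ≤ max M 0 := le_max_left _ _
    have hXpos : 0 < (L * t) ^ (n - m) * t := by positivity
    have hfinal : ((L * t) ^ (n - m) * t) ^ m ≤ (max M 0) ^ m :=
      pow_le_pow_left₀ (le_of_lt hXpos) hstep m
    have heq := key_eq (g (2*t)) t hg2t ht m n hm hmn
    rw [heq]
    have : ((g (2*t) ^ (-(1/(m:ℝ))) * (2*t) ^ ((1/(m:ℝ))-1) * t) ^ (n - m) * t) ^ m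
        = ((L * t) ^ (n - m) * t) ^ m := by rw [hL]
    rw [this]
    have hCpos : (0:ℝ) < C := by rw [hC]; positivity
    exact mul_le_mul_of_nonneg_right hfinal (le_of_lt hCpos)
  -- transfer along t ↦ 2t
  have htend : Filter.Tendsto (fun t : ℝ => 2*t) (nhdsWithin 0 (Set.Ioi 0))
      (nhdsWithin 0 (Set.Ioi 0)) := by
    refine tendsto_nhdsWithin_of_tendsto_nhds_of_eventually_within _ ?_ ?_
    · have h0 : Filter.Tendsto (fun t : ℝ => 2*t) (nhds 0) (nhds 0) := by
        simpa using (continuous_mul_left (2:ℝ)).tendsto 0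
      exact h0.mono_left nhdsWithin_le_nhds
    · filter_upwards [self_mem_nhdsWithin] with t ht
      exact mul_pos two_pos (Set.mem_Ioi.mp ht)
  have hfreq : ∃ᶠ t in nhdsWithin (0:ℝ) (Set.Ioi 0),
      g (2*t) ^ ((m:ℝ) - (n:ℝ)) * (2*t) ^ (n:ℝ) ≤ (max M 0) ^ m * C := by
    have := hM.and_eventually self_mem_nhdsWithin
    exact this.mono fun t ⟨h1, h2⟩ => key t h2 h1
  exact htend.frequently hfreq
end

section
/- Let J : [r, 2r] → [0,∞) be a non-decreasing function with J(r) > 0, g : [0,∞) → (0,∞) non-decreasing, m ≥ 1 an integer, C > 0, and suppose J(r₂) − J(r₁) ≥ C (r₂ − r₁)^m g(J(r₁)) for all r ≤ r₁ < r₂ ≤ 2r. Then at least one of the following holds: (a) ∫_{J(r)}^{J(2r)} dζ / g(ζ/2) ≥ C' r^m, or (b) ∫_{J(r)}^{J(2r)} g(ζ/2)^{-1/m} ζ^{1/m−1} dζ ≥ C' r, where C' > 0 depends only on C, m. -/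
set_option maxHeartbeats 1000000

open Real MeasureTheory Set Filter

theorem stmt_11 (m : ℕ) (hm : 1 ≤ m) (C : ℝ) (hC : 0 < C) :
    ∃ C' > (0:ℝ), ∀ (r : ℝ) (J g : ℝ → ℝ), 0 < r →
      MonotoneOn J (Set.Icc r (2 * r)) → 0 < J r →
      MonotoneOn g (Set.Ici 0) → (∀ t > (0:ℝ), 0 < g t) →
      (∀ r₁ r₂ : ℝ, r ≤ r₁ → r₁ < r₂ → r₂ ≤ 2 * r →
        J r₂ - J r₁ ≥ C * (r₂ - r₁) ^ m * g (J r₁)) →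
      ((∫ ζ in Set.Ioc (J r) (J (2 * r)), 1 / g (ζ / 2)) ≥ C' * r ^ m ∨
       (∫ ζ in Set.Ioc (J r) (J (2 * r)),
          g (ζ / 2) ^ (-(1/(m:ℝ))) * ζ ^ ((1/(m:ℝ)) - 1)) ≥ C' * r) := by
  have hmR : (0:ℝ) < m := by exact_mod_cast Nat.lt_of_lt_of_le Nat.zero_lt_one hm
  have hm0 : (m:ℝ) ≠ 0 := ne_of_gt hmR
  have h1m : (0:ℝ) < 1/(m:ℝ) := by positivity
  have h1m1 : (1:ℝ)/(m:ℝ) ≤ 1 := by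
    rw [div_le_one hmR]; exact_mod_cast hm
  have h2pow : 1 < (2:ℝ) ^ ((1:ℝ)/(m:ℝ)) :=
    (Real.one_lt_rpow_iff_of_pos (by norm_num)).2 (Or.inl ⟨one_lt_two, h1m⟩)
  set κ : ℝ := m * ((2:ℝ) ^ ((1:ℝ)/(m:ℝ)) - 1) * C ^ ((1:ℝ)/(m:ℝ)) with hκdef
  have hκ : 0 < κ := by
    apply mul_pos (mul_pos hmR (by linarith)) (Real.rpow_pos_of_pos hC _)
  refine ⟨min (C / 2^m) (κ/4), lt_min (by positivity) (by positivity), ?_⟩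
  intro r J g hr hJmono hJr hgmono hgpos hiter
  have hr2 : r ≤ 2*r := by linarith
  set Gf : ℝ → ℝ := fun ζ => 1 / g (ζ / 2) with hGf
  set Ff : ℝ → ℝ := fun ζ => g (ζ / 2) ^ (-(1/(m:ℝ))) * ζ ^ ((1/(m:ℝ)) - 1) with hFf
  set a := J r with ha
  set b := J (2*r) with hb
  have hJle : ∀ s, r ≤ s → s ≤ 2*r → a ≤ J s ∧ J s ≤ b := fun s h1 h2 =>
    ⟨hJmono ⟨le_refl r, hr2⟩ ⟨h1, h2⟩ h1, hJmono ⟨h1, h2⟩ ⟨hr2, le_refl _⟩ h2⟩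
  have hJpos : ∀ s, r ≤ s → s ≤ 2*r → 0 < J s := fun s h1 h2 =>
    lt_of_lt_of_le hJr (hJle s h1 h2).1
  have hab : a ≤ b := (hJle r le_rfl hr2).2
  have ha0 : 0 < a := hJr
  have ha2 : 0 < g (a/2) := hgpos _ (by linarith)
  -- pointwise positivity on the base interval
  have hζpos : ∀ ζ : ℝ, ζ ∈ Ioc a b → 0 < ζ := fun ζ hζ => lt_trans ha0 hζ.1
  have hgζ : ∀ ζ : ℝ, ζ ∈ Ioc a b → 0 < g (ζ/2) := fun ζ hζ =>
    hgpos _ (by have := hζpos ζ hζ; linarith)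
  have hgζa : ∀ ζ : ℝ, ζ ∈ Ioc a b → g (a/2) ≤ g (ζ/2) := fun ζ hζ =>
    hgmono (by simp; linarith) (by simp; have := hζpos ζ hζ; linarith) (by linarith [hζ.1])
  have hGnn : ∀ ζ : ℝ, ζ ∈ Ioc a b → 0 ≤ Gf ζ := fun ζ hζ => by
    have h1 := hgζ ζ hζ
    simp only [hGf]; positivity
  have hFnn : ∀ ζ : ℝ, ζ ∈ Ioc a b → 0 ≤ Ff ζ := fun ζ hζ => by
    have h1 := hgζ ζ hζ; have h2 := hζpos ζ hζ
    simp only [hFf]; positivity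
  -- measurability
  have hGmeas : AEMeasurable Gf (volume.restrict (Ioc a b)) := by
    apply aemeasurable_restrict_of_antitoneOn measurableSet_Ioc
    intro x hx y hy hxy
    exact one_div_le_one_div_of_le (hgζ x hx)
      (hgmono (by simp; linarith [hζpos x hx]) (by simp; linarith [hζpos y hy]) (by linarith))
  have hFmeas : AEMeasurable Ff (volume.restrict (Ioc a b)) := by
    have h1 : AEMeasurable (fun ζ : ℝ => g (ζ/2) ^ (-(1/(m:ℝ)))) (volume.restrict (Ioc a b)) := by
      apply aemeasurable_restrict_of_antitoneOn measurableSet_Ioc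
      intro x hx y hy hxy
      exact Real.rpow_le_rpow_of_nonpos (hgζ x hx)
        (hgmono (by simp; linarith [hζpos x hx]) (by simp; linarith [hζpos y hy]) (by linarith))
        (by linarith)
    have h2 : AEMeasurable (fun ζ : ℝ => ζ ^ ((1:ℝ)/(m:ℝ) - 1)) (volume.restrict (Ioc a b)) := by
      apply aemeasurable_restrict_of_antitoneOn measurableSet_Ioc
      intro x hx y hy hxy
      exact Real.rpow_le_rpow_of_nonpos (hζpos x hx) hxy (by linarith)
    exact h1.mul h2
  -- integrability
  have hvol : ∀ p q : ℝ, (volume (Ioc p q)) < ⊤ := fun p q => by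
    rw [Real.volume_Ioc]; exact ENNReal.ofReal_lt_top
  have hconstG : IntegrableOn (fun _ : ℝ => 1 / g (a/2)) (Ioc a b) volume :=
    integrableOn_const (hvol a b).ne
  have hGint : IntegrableOn Gf (Ioc a b) := by
    refine Integrable.mono' hconstG hGmeas.aestronglyMeasurable ?_
    refine (ae_restrict_iff' measurableSet_Ioc).2 (ae_of_all _ fun ζ hζ => ?_)
    rw [Real.norm_eq_abs, abs_of_nonneg (hGnn ζ hζ)]
    exact one_div_le_one_div_of_le ha2 (hgζa ζ hζ)
  have hconstF : IntegrableOn (fun _ : ℝ => g (a/2) ^ (-(1/(m:ℝ))) * a ^ ((1:ℝ)/(m:ℝ) - 1))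
      (Ioc a b) volume := integrableOn_const (hvol a b).ne
  have hFint : IntegrableOn Ff (Ioc a b) := by
    refine Integrable.mono' hconstF hFmeas.aestronglyMeasurable ?_
    refine (ae_restrict_iff' measurableSet_Ioc).2 (ae_of_all _ fun ζ hζ => ?_)
    rw [Real.norm_eq_abs, abs_of_nonneg (hFnn ζ hζ)]
    have e1 : g (ζ/2) ^ (-(1/(m:ℝ))) ≤ g (a/2) ^ (-(1/(m:ℝ))) :=
      Real.rpow_le_rpow_of_nonpos ha2 (hgζa ζ hζ) (by linarith)
    have e2 : ζ ^ ((1:ℝ)/(m:ℝ) - 1) ≤ a ^ ((1:ℝ)/(m:ℝ) - 1) :=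
      Real.rpow_le_rpow_of_nonpos ha0 (le_of_lt hζ.1) (by linarith)
    exact mul_le_mul e1 e2 (Real.rpow_nonneg (hζpos ζ hζ).le _)
      (Real.rpow_nonneg ha2.le _)
  -- the block estimate
  have hblock : ∀ s, r ≤ s → s ≤ 2*r → 2 * J s ≤ b →
      κ * ((J s / (C * g (J s))) ^ ((1:ℝ)/(m:ℝ))) ≤ ∫ ζ in Ioc (J s) (2 * J s), Ff ζ := by
    intro s h1 h2 h3
    have hp : 0 < J s := hJpos s h1 h2
    have hgp : 0 < g (J s) := hgpos _ hp
    have hsub : Ioc (J s) (2 * J s) ⊆ Ioc a b := Ioc_subset_Ioc (hJle s h1 h2).1 h3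
    have hpt : ∀ ζ ∈ Ioc (J s) (2 * J s),
        (g (J s)) ^ (-(1/(m:ℝ))) * ζ ^ ((1:ℝ)/(m:ℝ) - 1) ≤ Ff ζ := by
      intro ζ hζ
      have hζ0 : 0 < ζ := hp.trans hζ.1
      have h12 : g (ζ/2) ≤ g (J s) :=
        hgmono (by simp; linarith) (by simp; linarith) (by linarith [hζ.2])
      have := Real.rpow_le_rpow_of_nonpos (hgpos _ (by linarith : (0:ℝ) < ζ/2)) h12
        (by linarith : -(1/(m:ℝ)) ≤ 0)
      exact mul_le_mul_of_nonneg_right this (Real.rpow_nonneg hζ0.le _)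
    have hintF : IntegrableOn Ff (Ioc (J s) (2 * J s)) := hFint.mono_set hsub
    have hint2 : IntegrableOn (fun ζ : ℝ => ζ ^ ((1:ℝ)/(m:ℝ) - 1)) (Ioc (J s) (2 * J s)) := by
      have : IntervalIntegrable (fun ζ : ℝ => ζ ^ ((1:ℝ)/(m:ℝ) - 1)) volume (J s) (2 * J s) :=
        intervalIntegral.intervalIntegrable_rpow' (by linarith)
      exact (intervalIntegrable_iff_integrableOn_Ioc_of_le (by linarith)).1 this
    have hintc : IntegrableOn
        (fun ζ : ℝ => (g (J s)) ^ (-(1/(m:ℝ))) * ζ ^ ((1:ℝ)/(m:ℝ) - 1)) (Ioc (J s) (2 * J s)) :=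
      hint2.const_mul _
    have hmono := setIntegral_mono_on hintc hintF measurableSet_Ioc hpt
    have hcalc : (∫ ζ in Ioc (J s) (2 * J s), (g (J s)) ^ (-(1/(m:ℝ))) * ζ ^ ((1:ℝ)/(m:ℝ) - 1))
        = (g (J s)) ^ (-(1/(m:ℝ))) *
          (((2 * J s) ^ ((1:ℝ)/(m:ℝ)) - (J s) ^ ((1:ℝ)/(m:ℝ))) / ((1:ℝ)/(m:ℝ))) := by
      rw [MeasureTheory.integral_const_mul]
      congr 1
      rw [← intervalIntegral.integral_of_le (by linarith : J s ≤ 2 * J s)]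
      rw [integral_rpow (Or.inl (by linarith : (-1:ℝ) < (1:ℝ)/(m:ℝ) - 1))]
      norm_num
    have halg : κ * ((J s / (C * g (J s))) ^ ((1:ℝ)/(m:ℝ)))
        = (g (J s)) ^ (-(1/(m:ℝ))) *
          (((2 * J s) ^ ((1:ℝ)/(m:ℝ)) - (J s) ^ ((1:ℝ)/(m:ℝ))) / ((1:ℝ)/(m:ℝ))) := by
      rw [Real.div_rpow hp.le (by positivity), Real.mul_rpow hC.le hgp.le,
        Real.mul_rpow (by norm_num : (0:ℝ) ≤ 2) hp.le, Real.rpow_neg hgp.le, hκdef]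
      have hCn : C ^ ((1:ℝ)/(m:ℝ)) ≠ 0 := ne_of_gt (Real.rpow_pos_of_pos hC _)
      have hgn : g (J s) ^ ((1:ℝ)/(m:ℝ)) ≠ 0 := ne_of_gt (Real.rpow_pos_of_pos hgp _)
      field_simp
    rw [hcalc] at hmono
    rw [halg]
    exact hmono
  -- the key induction on the number of doublings
  have key : ∀ n : ℕ, ∀ s, r ≤ s → s ≤ 2*r → ∀ δ : ℝ, 0 < δ → b < 2^n * J s →
      ∃ u, 0 ≤ u ∧ u ≤ 2*r - s ∧
        C * u^m ≤ (∫ ζ in Ioc (J s) b, Gf ζ) ∧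
        κ * (2*r - s - u) - δ ≤ ∫ ζ in Ioc (J s) b, Ff ζ := by
    intro n
    induction n with
    | zero =>
      intro s h1 h2 δ hδ hlt
      exfalso
      have := (hJle s h1 h2).2
      simp only [pow_zero, one_mul] at hlt
      linarith
    | succ n ih =>
      intro s h1 h2 δ hδ hlt
      have hJs : 0 < J s := hJpos s h1 h2
      have hsubs : Ioc (J s) b ⊆ Ioc a b := Ioc_subset_Ioc_left (hJle s h1 h2).1
      have hGnn' : 0 ≤ᵐ[volume.restrict (Ioc (J s) b)] Gf :=
        (ae_restrict_iff' measurableSet_Ioc).2 (ae_of_all _ fun ζ hζ => hGnn ζ (hsubs hζ))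
      have hFnn' : 0 ≤ᵐ[volume.restrict (Ioc (J s) b)] Ff :=
        (ae_restrict_iff' measurableSet_Ioc).2 (ae_of_all _ fun ζ hζ => hFnn ζ (hsubs hζ))
      have hGnn0 : 0 ≤ ∫ ζ in Ioc (J s) b, Gf ζ :=
        setIntegral_nonneg measurableSet_Ioc (fun ζ hζ => hGnn ζ (hsubs hζ))
      have hFnn0 : 0 ≤ ∫ ζ in Ioc (J s) b, Ff ζ :=
        setIntegral_nonneg measurableSet_Ioc (fun ζ hζ => hFnn ζ (hsubs hζ))
      by_cases hcase : b < 2 * J s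
      · -- final stretch
        rcases eq_or_lt_of_le h2 with heq | hlt2
        · refine ⟨0, le_rfl, by linarith, ?_, ?_⟩
          · rw [zero_pow (by omega : m ≠ 0), mul_zero]; exact hGnn0
          · rw [heq] at hFnn0 ⊢; simp; linarith
        · refine ⟨2*r - s, by linarith, le_rfl, ?_, ?_⟩
          · have hit := hiter s (2*r) h1 hlt2 le_rfl
            have hgJs : 0 < g (J s) := hgpos _ hJs
            have hpt : ∀ ζ ∈ Ioc (J s) b, (fun _ : ℝ => 1 / g (J s)) ζ ≤ Gf ζ := by
              intro ζ hζ
              have hζ0 : 0 < ζ := hJs.trans hζ.1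
              have h12 : g (ζ/2) ≤ g (J s) :=
                hgmono (by simp; linarith) (by simp; linarith)
                  (by have := hζ.2; linarith)
              exact one_div_le_one_div_of_le (hgpos _ (by linarith : (0:ℝ) < ζ/2)) h12
            have hconst' : IntegrableOn (fun _ : ℝ => 1 / g (J s)) (Ioc (J s) b) volume :=
              integrableOn_const (hvol (J s) b).ne
            have hmono := setIntegral_mono_on hconst'
              (hGint.mono_set hsubs) measurableSet_Ioc hpt
            rw [setIntegral_const, measureReal_def, Real.volume_Ioc,
              ENNReal.toReal_ofReal (by linarith [(hJle s h1 h2).2] : (0:ℝ) ≤ b - J s),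
              smul_eq_mul] at hmono
            have h2' : C * (2*r - s)^m ≤ (b - J s) * (1 / g (J s)) := by
              rw [mul_one_div, le_div_iff₀ hgJs]
              linarith [hit]
            linarith
          · have : κ * (2*r - s - (2*r - s)) - δ = -δ := by ring
            rw [this]; linarith
      · -- doubling case
        push_neg at hcase
        set d : ℝ := (J s / (C * g (J s))) ^ ((1:ℝ)/(m:ℝ)) with hd
        have hgJs : 0 < g (J s) := hgpos _ hJs
        have hd0 : 0 < d := Real.rpow_pos_of_pos (by positivity) _
        have hdpow : d ^ m = J s / (C * g (J s)) := by
          rw [hd, ← Real.rpow_natCast ((J s / (C * g (J s))) ^ ((1:ℝ)/(m:ℝ))) m,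
            ← Real.rpow_mul (by positivity : (0:ℝ) ≤ J s / (C * g (J s)))]
          rw [one_div_mul_cancel hm0, Real.rpow_one]
        set T := {ρ : ℝ | ρ ∈ Icc s (2*r) ∧ 2 * J s ≤ J ρ} with hT
        have hTne : (2*r) ∈ T := ⟨⟨h2, le_rfl⟩, hcase⟩
        have hTbdd : BddBelow T := ⟨s, fun ρ hρ => hρ.1.1⟩
        set t := sInf T with ht
        have hst : s ≤ t := le_csInf ⟨_, hTne⟩ fun ρ hρ => hρ.1.1
        have ht2r : t ≤ 2*r := csInf_le hTbdd hTne
        have htd : t - s ≤ d := by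
          by_contra hcon
          push_neg at hcon
          set ρ := (s + d + t)/2 with hρ
          have hρ1 : s + d < ρ := by rw [hρ]; linarith
          have hρ2 : ρ < t := by rw [hρ]; linarith
          have hρs : s < ρ := by linarith
          have hρ2r : ρ ≤ 2*r := by linarith
          have hJρ : J ρ < 2 * J s := by
            by_contra h'
            push_neg at h'
            exact absurd (csInf_le hTbdd ⟨⟨hρs.le, hρ2r⟩, h'⟩) (not_le.2 hρ2)
          have hit := hiter s ρ h1 hρs hρ2r
          have hpow : d ^ m < (ρ - s)^m :=
            pow_lt_pow_left₀ (by linarith) hd0.le (by omega)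
          rw [hdpow] at hpow
          have : J s < C * (ρ - s)^m * g (J s) := by
            rw [div_lt_iff₀ (by positivity)] at hpow
            nlinarith
          linarith
        have hblk := hblock s h1 h2 hcase
        have hsub2 : Ioc (J s) (2 * J s) ⊆ Ioc (J s) b := Ioc_subset_Ioc_right hcase
        rcases eq_or_lt_of_le ht2r with htEq | htLt
        · -- the chain reaches 2r in one block
          refine ⟨0, le_rfl, by linarith, ?_, ?_⟩
          · rw [zero_pow (by omega : m ≠ 0), mul_zero]; exact hGnn0
          · have hmono2 : (∫ ζ in Ioc (J s) (2 * J s), Ff ζ) ≤ ∫ ζ in Ioc (J s) b, Ff ζ :=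
              setIntegral_mono_set (hFint.mono_set hsubs) hFnn' hsub2.eventuallyLE
            have : κ * (2*r - s) ≤ κ * d := mul_le_mul_of_nonneg_left (by linarith) hκ.le
            nlinarith
        · -- recurse past the first doubling point
          set ε := δ / (2*κ) with hε
          have hε0 : 0 < ε := by positivity
          set s' := min (t + ε) (2*r) with hs'
          have hts' : t < s' := lt_min (by linarith) htLt
          have hs'2r : s' ≤ 2*r := min_le_right _ _
          have hs'r : r ≤ s' := le_trans (le_trans h1 hst) hts'.le
          have hJs' : 2 * J s ≤ J s' := by
            obtain ⟨ρ, hρT, hρlt⟩ := exists_lt_of_csInf_lt ⟨_, hTne⟩ hts'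
            exact le_trans hρT.2
              (hJmono ⟨le_trans h1 hρT.1.1, hρT.1.2⟩ ⟨hs'r, hs'2r⟩ hρlt.le)
          have hlt' : b < 2^n * J s' := by
            have e1 : (2:ℝ)^(n+1) * J s = 2^n * (2 * J s) := by ring
            calc b < 2^(n+1) * J s := hlt
              _ = 2^n * (2 * J s) := e1
              _ ≤ 2^n * J s' := by
                  apply mul_le_mul_of_nonneg_left hJs' (by positivity)
          obtain ⟨u, hu0, hu1, hG', hF'⟩ := ih s' hs'r hs'2r (δ/2) (by positivity) hlt'
          have hJss' : J s ≤ J s' := by linarith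
          have hJs'b : J s' ≤ b := (hJle s' hs'r hs'2r).2
          refine ⟨u, hu0, by linarith, ?_, ?_⟩
          · calc C * u^m ≤ ∫ ζ in Ioc (J s') b, Gf ζ := hG'
              _ ≤ ∫ ζ in Ioc (J s) b, Gf ζ :=
                setIntegral_mono_set (hGint.mono_set hsubs) hGnn'
                  (Ioc_subset_Ioc_left hJss').eventuallyLE
          · have hsplit : (∫ ζ in Ioc (J s) b, Ff ζ)
                = (∫ ζ in Ioc (J s) (J s'), Ff ζ) + ∫ ζ in Ioc (J s') b, Ff ζ := by
              rw [← setIntegral_union (Ioc_disjoint_Ioc_of_le le_rfl) measurableSet_Ioc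
                (hFint.mono_set (fun ζ hζ => hsubs (Ioc_subset_Ioc_right hJs'b hζ)))
                (hFint.mono_set (fun ζ hζ => hsubs (Ioc_subset_Ioc_left hJss' hζ))),
                Ioc_union_Ioc_eq_Ioc hJss' hJs'b]
            have h1' : κ * d ≤ ∫ ζ in Ioc (J s) (J s'), Ff ζ := by
              refine le_trans hblk (setIntegral_mono_set
                (hFint.mono_set (fun ζ hζ => hsubs (Ioc_subset_Ioc_right hJs'b hζ)))
                ((ae_restrict_iff' measurableSet_Ioc).2 (ae_of_all _
                  fun ζ hζ => hFnn ζ (hsubs (Ioc_subset_Ioc_right hJs'b hζ))))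
                (Ioc_subset_Ioc_right hJs').eventuallyLE)
            have hεt : κ * (s' - t) ≤ δ/2 := by
              have h' : s' - t ≤ ε := by
                have : s' ≤ t + ε := min_le_left _ _
                linarith
              calc κ * (s' - t) ≤ κ * ε := mul_le_mul_of_nonneg_left h' hκ.le
                _ = δ/2 := by rw [hε]; field_simp
            have e1 : κ * (2*r - s - u)
                = κ * (2*r - s' - u) + κ * (s' - t) + κ * (t - s) := by ring
            have e2 : κ * (t - s) ≤ κ * d := mul_le_mul_of_nonneg_left htd hκ.le
            rw [hsplit]
            linarith
  -- conclude
  obtain ⟨n, hn⟩ : ∃ n : ℕ, b < 2^n * a := by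
    obtain ⟨n, hn⟩ := pow_unbounded_of_one_lt (b/a) one_lt_two
    exact ⟨n, by rw [div_lt_iff₀ ha0] at hn; linarith⟩
  obtain ⟨u, hu0, hu1, hG, hF⟩ := key n r le_rfl hr2 (κ*r/4) (by positivity) hn
  by_cases hu : r/2 ≤ u
  · left
    calc min (C / 2^m) (κ/4) * r^m ≤ (C / 2^m) * r^m :=
        mul_le_mul_of_nonneg_right (min_le_left _ _) (by positivity)
      _ = C * (r/2)^m := by rw [div_pow]; ring
      _ ≤ C * u^m := mul_le_mul_of_nonneg_left
          (pow_le_pow_left₀ (by linarith) hu m) hC.le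
      _ ≤ _ := hG
  · right
    push_neg at hu
    have h1' : κ * (r/2) ≤ κ * (2*r - r - u) := mul_le_mul_of_nonneg_left (by linarith) hκ.le
    calc min (C / 2^m) (κ/4) * r ≤ (κ/4) * r :=
        mul_le_mul_of_nonneg_right (min_le_right _ _) hr.le
      _ = κ * (r/2) - κ*r/4 := by ring
      _ ≤ κ * (2*r - r - u) - κ*r/4 := by linarith
      _ ≤ _ := hF
end

section
/- Let r > 0 and let J : [r, 2r] → (0,∞) be non-decreasing with values satisfying J(r_{i+1}) = 2 J(r_i) along a finite sequence r = r₀ < r₁ < … < r_l with r_l ≥ 3r/2, where each step satisfies ((J(r_{i+1}) − J(r_i))/g(J(r_i)))^{1/m} ≥ C(r_{i+1} − r_i) for a non-decreasing positive g and integer m ≥ 1. Then ∫_{J(r₀)}^{J(r_l)} g(ζ/2)^{-1/m} ζ^{1/m−1} dζ ≥ C' (r_l − r₀) ≥ C' r/2, where C' > 0 depends only on C and m. -/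
open Real MeasureTheory Set Filter

private lemma stmt_19_aux_meas (c : ℝ) : Measurable fun x : ℝ => x ^ c := by
  measurability

theorem stmt_19 (m : ℕ) (hm : 1 ≤ m) (C : ℝ) (hC : 0 < C) :
    ∃ C' > (0:ℝ), ∀ (r : ℝ) (l : ℕ) (ρ : ℕ → ℝ) (J g : ℝ → ℝ), 0 < r →
      ρ 0 = r → (3 * r / 2 ≤ ρ l) → (ρ l ≤ 2 * r) →
      (∀ i < l, ρ i < ρ (i + 1)) →
      MonotoneOn g (Set.Ici 0) → (∀ t > (0:ℝ), 0 < g t) →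
      0 < J (ρ 0) →
      (∀ i < l, J (ρ (i + 1)) = 2 * J (ρ i)) →
      (∀ i < l, ((J (ρ (i + 1)) - J (ρ i)) / g (J (ρ i))) ^ (1/(m:ℝ))
          ≥ C * (ρ (i + 1) - ρ i)) →
      ((∫ ζ in Set.Ioc (J (ρ 0)) (J (ρ l)),
          g (ζ / 2) ^ (-(1/(m:ℝ))) * ζ ^ ((1/(m:ℝ)) - 1)) ≥ C' * (ρ l - ρ 0) ∧
        C' * (ρ l - ρ 0) ≥ C' * (r / 2)) := by
  have hm1 : (1:ℝ) ≤ m := by exact_mod_cast hm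
  have hm0 : (0:ℝ) < m := by linarith
  set p : ℝ := 1/(m:ℝ) with hp
  have hp0 : 0 < p := by positivity
  have hq0 : p - 1 ≤ 0 := by
    have : p ≤ 1 := by rw [hp, div_le_one hm0]; exact hm1
    linarith
  set q : ℝ := p - 1 with hq
  have h2q : (0:ℝ) < 2 ^ q := Real.rpow_pos_of_pos (by norm_num) q
  refine ⟨C * 2 ^ q, by positivity, ?_⟩
  intro r l ρ J g hr hρ0 hρl1 hρl2 hρmono hg hgpos hJ0 hdouble hstep
  set a : ℕ → ℝ := fun i => J (ρ i) with ha
  have hdouble' : ∀ i < l, a (i + 1) = 2 * a i := hdouble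
  have hJ0' : 0 < a 0 := hJ0
  set f : ℝ → ℝ := fun ζ => g (ζ / 2) ^ (-p) * ζ ^ q with hf
  -- positivity of a
  have hapos : ∀ i, i ≤ l → 0 < a i := by
    intro i
    induction i with
    | zero => intro _; exact hJ0'
    | succ n ih =>
      intro h
      have hn : n < l := by omega
      have := ih (by omega)
      rw [hdouble' n hn]; linarith
  have halt : ∀ i, i < l → a i < a (i + 1) := by
    intro i hi
    have := hapos i (le_of_lt hi)
    rw [hdouble' i hi]; linarith
  have hamono : ∀ j, j ≤ l → ∀ i, i ≤ j → a i ≤ a j := by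
    intro j
    induction j with
    | zero =>
      intro _ i hi
      have h0 : i = 0 := by omega
      exact le_of_eq (congrArg a h0)
    | succ n ih =>
      intro hn i hi
      by_cases h : i = n + 1
      · rw [h]
      · have h1 : a i ≤ a n := ih (by omega) i (by omega)
        have h2 := halt n (by omega)
        linarith
  have h0l : a 0 ≤ a l := hamono l le_rfl 0 (Nat.zero_le l)
  have hsub : ∀ i, i < l → Ioc (a i) (a (i+1)) ⊆ Ioc (a 0) (a l) := by
    intro i hi
    exact Ioc_subset_Ioc (hamono i (le_of_lt hi) 0 (Nat.zero_le i))
      (hamono l le_rfl (i+1) hi)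
  -- global integrability
  have hmem : ∀ ζ ∈ Ioc (a 0) (a l), 0 < ζ := fun ζ hζ => lt_trans hJ0' hζ.1
  have hmono2 : MonotoneOn (fun ζ => g (ζ / 2)) (Ioc (a 0) (a l)) := by
    intro x hx y hy hxy
    have hx0 := hmem x hx
    have hy0 := hmem y hy
    exact hg (by simp; linarith) (by simp; linarith) (by linarith)
  have haem : AEMeasurable (fun ζ => g (ζ / 2)) (volume.restrict (Ioc (a 0) (a l))) :=
    aemeasurable_restrict_of_monotoneOn measurableSet_Ioc hmono2
  have hfaem : AEMeasurable f (volume.restrict (Ioc (a 0) (a l))) := by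
    exact ((stmt_19_aux_meas (-p)).comp_aemeasurable haem).mul
      (stmt_19_aux_meas q).aemeasurable
  have hga0 : 0 < g (a 0 / 2) := hgpos _ (by linarith)
  have hglb : ∀ ζ ∈ Ioc (a 0) (a l), 0 < g (ζ / 2) := by
    intro ζ hζ
    exact hgpos _ (by have := hmem ζ hζ; linarith)
  have hfnonneg : ∀ ζ ∈ Ioc (a 0) (a l), 0 ≤ f ζ := by
    intro ζ hζ
    exact mul_nonneg (Real.rpow_nonneg (hglb ζ hζ).le _) (Real.rpow_nonneg (hmem ζ hζ).le _)
  have hfbdd : ∀ ζ ∈ Ioc (a 0) (a l), f ζ ≤ g (a 0 / 2) ^ (-p) * (a 0) ^ q := by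
    intro ζ hζ
    have hζ0 := hmem ζ hζ
    have h1 : g (a 0 / 2) ≤ g (ζ / 2) := by
      apply hg (by simp; linarith) (by simp; linarith) (by linarith [hζ.1])
    have A : g (ζ / 2) ^ (-p) ≤ g (a 0 / 2) ^ (-p) :=
      Real.rpow_le_rpow_of_nonpos hga0 h1 (by linarith)
    have B : ζ ^ q ≤ (a 0) ^ q :=
      Real.rpow_le_rpow_of_nonpos hJ0' hζ.1.le hq0
    exact mul_le_mul A B (Real.rpow_nonneg hζ0.le _) (Real.rpow_nonneg hga0.le _)
  have hint_glob : IntegrableOn f (Ioc (a 0) (a l)) := by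
    apply Integrable.mono' (g := fun _ => g (a 0 / 2) ^ (-p) * (a 0) ^ q)
      (integrableOn_const measure_Ioc_lt_top.ne) hfaem.aestronglyMeasurable
    filter_upwards [ae_restrict_mem measurableSet_Ioc] with ζ hζ
    rw [Real.norm_eq_abs, abs_of_nonneg (hfnonneg ζ hζ)]
    exact hfbdd ζ hζ
  -- per-step lower bound
  have hkey : ∀ i, i < l → C * 2 ^ q * (ρ (i+1) - ρ i) ≤ ∫ ζ in Ioc (a i) (a (i+1)), f ζ := by
    intro i hi
    have hai : 0 < a i := hapos i (le_of_lt hi)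
    have hdi := hdouble' i hi
    have hlt := halt i hi
    have hgi : 0 < g (a i) := hgpos _ hai
    have hIOn : IntegrableOn f (Ioc (a i) (a (i+1))) := hint_glob.mono_set (hsub i hi)
    have hconst : ∀ ζ ∈ Ioc (a i) (a (i+1)), g (a i) ^ (-p) * (a (i+1)) ^ q ≤ f ζ := by
      intro ζ hζ
      have hζ0 : 0 < ζ := lt_trans hai hζ.1
      have hζle : ζ ≤ 2 * a i := by rw [← hdi]; exact hζ.2
      have h1 : g (ζ / 2) ≤ g (a i) := by
        apply hg (by simp; linarith) (by simp [hai.le]) (by linarith)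
      have hgz : 0 < g (ζ / 2) := hgpos _ (by linarith)
      have A : g (a i) ^ (-p) ≤ g (ζ / 2) ^ (-p) :=
        Real.rpow_le_rpow_of_nonpos hgz h1 (by linarith)
      have B : (a (i+1)) ^ q ≤ ζ ^ q :=
        Real.rpow_le_rpow_of_nonpos hζ0 hζ.2 hq0
      exact mul_le_mul A B (Real.rpow_nonneg (by linarith) _) (Real.rpow_nonneg hgz.le _)
    have hge := setIntegral_ge_of_const_le_real measurableSet_Ioc measure_Ioc_lt_top.ne hconst hIOn
    rw [measureReal_def, Real.volume_Ioc, ENNReal.toReal_ofReal (by linarith)] at hge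
    refine le_trans ?_ hge
    have heq : g (a i) ^ (-p) * (a (i+1)) ^ q * (a (i+1) - a i)
        = 2 ^ q * ((a i / g (a i)) ^ p) := by
      have hq1 : q + 1 = p := by rw [hq]; ring
      have hsub' : a (i+1) - a i = a i := by rw [hdi]; ring
      rw [hsub', hdi]
      calc g (a i) ^ (-p) * (2 * a i) ^ q * a i
          = g (a i) ^ (-p) * (2 ^ q * (a i) ^ q) * a i := by
            rw [Real.mul_rpow (by norm_num) hai.le]
        _ = 2 ^ q * ((a i) ^ q * (a i) ^ (1:ℝ)) * g (a i) ^ (-p) := by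
            rw [Real.rpow_one]; ring
        _ = 2 ^ q * (a i) ^ (q + 1) * g (a i) ^ (-p) := by
            rw [← Real.rpow_add hai]
        _ = 2 ^ q * ((a i) ^ p * (g (a i) ^ p)⁻¹) := by
            rw [hq1, Real.rpow_neg hgi.le]; ring
        _ = 2 ^ q * (a i / g (a i)) ^ p := by
            rw [Real.div_rpow hai.le hgi.le, div_eq_mul_inv]
    rw [heq]
    have hst : C * (ρ (i+1) - ρ i) ≤ ((a (i+1) - a i) / g (a i)) ^ p := hstep i hi
    have hsub' : a (i+1) - a i = a i := by rw [hdi]; ring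
    rw [hsub'] at hst
    calc C * 2 ^ q * (ρ (i+1) - ρ i) = 2 ^ q * (C * (ρ (i+1) - ρ i)) := by ring
      _ ≤ 2 ^ q * ((a i / g (a i)) ^ p) := by
          exact mul_le_mul_of_nonneg_left hst h2q.le
  -- interval integrability per step
  have hii : ∀ k < l, IntervalIntegrable f volume (a k) (a (k+1)) := by
    intro k hk
    rw [intervalIntegrable_iff_integrableOn_Ioc_of_le (halt k hk).le]
    exact hint_glob.mono_set (hsub k hk)
  have hsum := intervalIntegral.sum_integral_adjacent_intervals hii
  have hmain : C * 2 ^ q * (ρ l - ρ 0) ≤ ∫ ζ in Ioc (a 0) (a l), f ζ := by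
    rw [← intervalIntegral.integral_of_le h0l, ← hsum]
    have hrw : C * 2 ^ q * (ρ l - ρ 0)
        = ∑ k ∈ Finset.range l, C * 2 ^ q * (ρ (k+1) - ρ k) := by
      rw [← Finset.mul_sum, Finset.sum_range_sub]
    rw [hrw]
    apply Finset.sum_le_sum
    intro k hk
    have hk' := Finset.mem_range.mp hk
    rw [intervalIntegral.integral_of_le (halt k hk').le]
    exact hkey k hk'
  constructor
  · exact hmain
  · apply mul_le_mul_of_nonneg_left _ (by positivity)
    rw [hρ0]; linarith
end
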